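/- Let {â^{(k)}(z), k ≥ 0} be symbols with â^{(k)}(z), â^{(k)}(−z) coprime for each k, such that for each k the points −z_ℓ^{(k)} = −e^{−θ_ℓ/2^{k+1}} are zeros of â^{(k)} of multiplicity τ_ℓ (ℓ = 1,…,N). For each k and 1 ≤ i ≤ n(k) let p_i^{(k)} solve â^{(k)}(z)p_i^{(k)}(z) − â^{(k)}(−z)p_i^{(k)}(−z) = 2z^{2i−1}, and set m_i^{(k)}(z) = â^{(k)}(z)p_i^{(k)}(z)/z^{2i−1}. Then for every k ≥ 0: m_i^{(k)}(z_ℓ^{(k)}) = 2, m_i^{(k)}(−z_ℓ^{(k)}) = 0, and (d^r/dz^r) m_i^{(k)}(±z_ℓ^{(k)}) = 0 for r = 1,…,τ_ℓ − 1 and ℓ = 1,…,N. -/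

import Mathlib

open Polynomial

open Topology in
private lemma polyIterDeriv (A : Polynomial ℂ) (r : ℕ) :
    iteratedDeriv r (fun w : ℂ => A.eval w) = fun w => (derivative^[r] A).eval w := by
  induction r with
  | zero => simp
  | succ r ih =>
    rw [iteratedDeriv_succ, ih]
    funext w
    rw [Function.iterate_succ_apply', ← Polynomial.deriv]

private lemma dvd_num_deriv {x : ℂ} {Q S : Polynomial ℂ} {r : ℕ}
    (h : (X - C x) ^ (r + 2) ∣ Q) :
    (X - C x) ^ (r + 1) ∣ derivative Q * S - Q * derivative S := by
  have h1 : (X - C x) ^ (r + 1) ∣ derivative Q := by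
    obtain ⟨R, rfl⟩ := h
    rw [derivative_mul, derivative_pow]
    refine dvd_add (Dvd.dvd.mul_right ?_ _) (Dvd.dvd.mul_right ?_ _)
    · exact Dvd.dvd.mul_right (Dvd.dvd.mul_left (by simp) _) _
    · exact pow_dvd_pow _ (by omega)
  exact dvd_sub (h1.mul_right _)
    (((pow_dvd_pow _ (by omega)).trans h).mul_right _)

private lemma deriv_poly_div {Q S : Polynomial ℂ} {w : ℂ} (hw : S.eval w ≠ 0) :
    deriv (fun u => Q.eval u / S.eval u) w =
      (derivative Q * S - Q * derivative S).eval w / (S * S).eval w := by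
  rw [deriv_fun_div (Polynomial.differentiableAt (𝕜 := ℂ) (p := Q))
    (Polynomial.differentiableAt (𝕜 := ℂ) (p := S)) hw]
  simp [Polynomial.deriv, sq]

open Topology in
private lemma aux_vanish : ∀ (r : ℕ) (Q S : Polynomial ℂ) (x : ℂ) (f : ℂ → ℂ),
    S.eval x ≠ 0 → (X - C x) ^ (r + 1) ∣ Q →
    f =ᶠ[𝓝 x] (fun w => Q.eval w / S.eval w) → iteratedDeriv r f x = 0 := by
  intro r
  induction r with
  | zero =>
    intro Q S x f hS hdvd hf
    obtain ⟨R, rfl⟩ := hdvd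
    rw [iteratedDeriv_zero, hf.eq_of_nhds]
    simp
  | succ r ih =>
    intro Q S x f hS hdvd hf
    rw [iteratedDeriv_succ']
    have hSnear : ∀ᶠ w in 𝓝 x, S.eval w ≠ 0 :=
      (S.continuousAt).eventually_ne hS
    have hderiv : deriv f =ᶠ[𝓝 x]
        fun w => (derivative Q * S - Q * derivative S).eval w / (S * S).eval w := by
      filter_upwards [hf.deriv, hSnear] with w h1 h2
      rw [h1, deriv_poly_div h2]
    exact ih _ (S * S) x (deriv f) (by simpa using mul_ne_zero hS hS)
      (dvd_num_deriv hdvd) hderiv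

/-- For non-stationary symbols `â⁽ᵏ⁾` coprime with `â⁽ᵏ⁾(-·)` and having
zeros of multiplicity `τ_ℓ` at `-z_ℓ⁽ᵏ⁾ = -e^{-θ_ℓ/2^{k+1}}`, the interpolatory symbols
`m_i⁽ᵏ⁾(z) = â⁽ᵏ⁾(z)p_i⁽ᵏ⁾(z)/z^{2i-1}` (with `p_i⁽ᵏ⁾` solving the Bezout equation
`â⁽ᵏ⁾(z)p(z) - â⁽ᵏ⁾(-z)p(-z) = 2z^{2i-1}`) satisfy the reproduction conditions
`m_i⁽ᵏ⁾(z_ℓ⁽ᵏ⁾)=2`, `m_i⁽ᵏ⁾(-z_ℓ⁽ᵏ⁾)=0` and vanishing derivatives up to order `τ_ℓ-1`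
at `±z_ℓ⁽ᵏ⁾`. -/
theorem nonstationary_interpolatory_reproduction_conditions
    (N : ℕ) (θ : Fin N → ℂ) (τ : Fin N → ℕ)
    (z : ℕ → Fin N → ℂ)
    (hz : ∀ k l, z k l = Complex.exp (-(θ l) / 2 ^ (k + 1)))
    (ahat : ℕ → Polynomial ℂ)
    (hcop : ∀ k, IsCoprime (ahat k) ((ahat k).comp (-X)))
    (hroot : ∀ k l, (ahat k).eval (-(z k l)) = 0)
    (hrootder : ∀ k l, ∀ r : ℕ, 1 ≤ r → r ≤ τ l - 1 →
      iteratedDeriv r (fun w : ℂ => (ahat k).eval w) (-(z k l)) = 0)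
    (n : ℕ → ℕ) (p : ℕ → ℕ → Polynomial ℂ)
    (hp : ∀ k i, 1 ≤ i → i ≤ n k →
      (ahat k) * (p k i) - ((ahat k).comp (-X)) * ((p k i).comp (-X)) =
        C 2 * X ^ (2 * i - 1))
    (m : ℕ → ℕ → ℂ → ℂ)
    (hm : ∀ k i (w : ℂ), m k i w = (ahat k).eval w * (p k i).eval w / w ^ (2 * i - 1)) :
    ∀ k, ∀ i, 1 ≤ i → i ≤ n k → ∀ l,
      m k i (z k l) = 2 ∧ m k i (-(z k l)) = 0 ∧
        ∀ r : ℕ, 1 ≤ r → r ≤ τ l - 1 →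
          iteratedDeriv r (m k i) (z k l) = 0 ∧
            iteratedDeriv r (m k i) (-(z k l)) = 0 := by
  intro k i hi1 hi2 l
  set q : ℕ := 2 * i - 1 with hq
  set x : ℂ := z k l with hxdef
  have hx0 : x ≠ 0 := by rw [hxdef, hz]; exact Complex.exp_ne_zero _
  -- Bezout identity evaluated pointwise
  have hbez : ∀ w : ℂ, (ahat k).eval w * (p k i).eval w
      - (ahat k).eval (-w) * (p k i).eval (-w) = 2 * w ^ q := by
    intro w
    have := congrArg (Polynomial.eval w) (hp k i hi1 hi2)
    simpa [eval_comp] using this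
  have hA0 : ahat k ≠ 0 := by
    intro h
    have h2 := hcop k
    rw [h, Polynomial.zero_comp] at h2
    exact not_isUnit_zero (isCoprime_zero_left.mp h2)
  -- divisibility at -x
  have hdvdA : ∀ r : ℕ, 1 ≤ r → r ≤ τ l - 1 →
      (X - C (-x)) ^ (r + 1) ∣ ahat k := by
    intro r h1 h2
    have hlt : r < (ahat k).rootMultiplicity (-x) := by
      apply lt_rootMultiplicity_of_isRoot_iterate_derivative_of_mem_nonZeroDivisors' hA0
      · intro j hj
        rcases Nat.eq_zero_or_pos j with hj0 | hj0
        · subst hj0; simpa [Polynomial.IsRoot] using hroot k l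
        · have := hrootder k l j hj0 (le_trans hj h2)
          rw [polyIterDeriv] at this
          simpa [Polynomial.IsRoot] using this
      · intro j _ hj0
        exact mem_nonZeroDivisors_of_ne_zero (by exact_mod_cast hj0)
    exact (pow_dvd_pow _ hlt).trans ((ahat k).pow_rootMultiplicity_dvd (-x))
  -- divisibility at x for the reflected polynomial
  have hdvdB : ∀ r : ℕ, 1 ≤ r → r ≤ τ l - 1 →
      (X - C x) ^ (r + 1) ∣ (ahat k).comp (-X) := by
    intro r h1 h2
    obtain ⟨R, hR⟩ := hdvdA r h1 h2
    have e1 : (X - C (-x)).comp (-X) = -(X - C x) := by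
      rw [sub_comp, X_comp, C_comp, map_neg]; ring
    rw [hR, mul_comp, pow_comp, e1]
    exact Dvd.dvd.mul_right (by rw [neg_pow]; exact dvd_mul_left _ _) _
  have hmfun : m k i = fun w => ((ahat k) * (p k i)).eval w / (X ^ q : Polynomial ℂ).eval w := by
    funext w
    simp [hm, eval_mul]
    rfl
  refine ⟨?_, ?_, ?_⟩
  · -- m x = 2
    rw [hm]
    have h1 : (ahat k).eval x * (p k i).eval x = 2 * x ^ q := by
      have := hbez x
      rw [hroot k l] at this
      simpa using this
    rw [← hq, h1, mul_div_assoc, div_self (pow_ne_zero _ hx0), mul_one]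
  · -- m (-x) = 0
    rw [hm, hroot k l]
    simp
  · intro r hr1 hr2
    constructor
    · -- derivative at x
      obtain ⟨s, rfl⟩ : ∃ s, r = s + 1 := ⟨r - 1, by omega⟩
      rw [iteratedDeriv_succ']
      set B : Polynomial ℂ := (ahat k).comp (-X) * (p k i).comp (-X) with hB
      have hne : ∀ᶠ w in (nhds x), w ≠ 0 := continuousAt_id.eventually_ne hx0
      have hg : m k i =ᶠ[nhds x]
          fun w => 2 + B.eval w / (X ^ q : Polynomial ℂ).eval w := by
        filter_upwards [hne] with w hw
        have hb := hbez w
        have hBval : B.eval w = (ahat k).eval (-w) * (p k i).eval (-w) := by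
          simp [hB, eval_comp]
        rw [hm, hBval]
        have : (ahat k).eval w * (p k i).eval w
            = 2 * w ^ q + (ahat k).eval (-w) * (p k i).eval (-w) := by linear_combination hb
        rw [this]
        have hwq : w ^ q ≠ 0 := pow_ne_zero _ hw
        field_simp
        simp only [eval_pow, eval_X]
        rw [← hq]
        ring
      have hder : deriv (m k i) =ᶠ[nhds x]
          fun w => (derivative B * X ^ q - B * derivative (X ^ q)).eval w
            / ((X ^ q : Polynomial ℂ) * X ^ q).eval w := by
        filter_upwards [hg.deriv, hne] with w h1 h2
        rw [h1]
        have : deriv (fun u => 2 + B.eval u / (X ^ q : Polynomial ℂ).eval u) w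
            = deriv (fun u => B.eval u / (X ^ q : Polynomial ℂ).eval u) w := by
          simp [deriv_const_add]
        rw [this, deriv_poly_div (by simpa using pow_ne_zero q h2)]
      refine aux_vanish s _ _ x (deriv (m k i)) ?_ ?_ hder
      · simp [pow_ne_zero, hx0]
      · exact dvd_num_deriv (((hdvdB (s + 1) hr1 hr2).mul_right _))
    · -- derivative at -x
      refine aux_vanish r ((ahat k) * (p k i)) (X ^ q) (-x) (m k i) ?_ ?_ ?_
      · simp [pow_ne_zero, neg_ne_zero, hx0]
      · exact ((hdvdA r hr1 hr2).mul_right _)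
      · exact Filter.EventuallyEq.of_eq hmfun
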